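/- Let G be a countable group acting on a countable set I, and (X₀, μ₀) a standard probability space that has at least one atom and is not concentrated on a single atom. The generalized Bernoulli action G ↷ (X₀, μ₀)^I is essentially free if and only if every g ∈ G − {e} moves infinitely many elements of I. -/

import Mathlib

open MeasureTheory

/-- Auxiliary: the "easy" direction. If some `g ≠ 1` moves only finitely many points,
the set of configurations equal to the atom on the (finite) support of `g` has positive
measure and consists of fixed points. -/
theorem generalized_bernoulli_aux_finite
    {G I X₀ : Type*} [Group G] [MulAction G I]
    [MeasurableSpace X₀]
    (μ₀ : Measure X₀) [IsProbabilityMeasure μ₀]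
    (a : X₀) (ha0 : μ₀ {a} ≠ 0) (hma : MeasurableSet ({a} : Set X₀))
    (μ : Measure (I → X₀))
    (hprod : ∀ (s : Finset I) (f : I → Set X₀), (∀ i, MeasurableSet (f i)) →
      μ {x : I → X₀ | ∀ i ∈ s, x i ∈ f i} = ∏ i ∈ s, μ₀ (f i))
    (g : G) (hfin : {i : I | g • i ≠ i}.Finite) :
    μ {x : I → X₀ | (fun i => x (g⁻¹ • i)) = x} ≠ 0 := by
  classical
  have hsub : {x : I → X₀ | ∀ i ∈ hfin.toFinset, x i ∈ ({a} : Set X₀)}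
      ⊆ {x : I → X₀ | (fun i => x (g⁻¹ • i)) = x} := by
    intro x hx
    have hx' : ∀ i, g • i ≠ i → x i = a := fun i hi => hx i (hfin.mem_toFinset.mpr hi)
    show (fun i => x (g⁻¹ • i)) = x
    funext i
    by_cases hgi : g • i = i
    · have h : g⁻¹ • i = i := inv_smul_eq_iff.mpr hgi.symm
      rw [h]
    · have h1 : x i = a := hx' i hgi
      have h2 : x (g⁻¹ • i) = a := by
        apply hx'
        rw [smul_inv_smul]
        intro h
        exact hgi (by conv_lhs => rw [h, smul_inv_smul])
      rw [h1, h2]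
  have hmeas := hprod hfin.toFinset (fun _ => {a}) (fun _ => hma)
  intro hzero
  have hle := (measure_mono hsub).trans_eq hzero
  rw [hmeas] at hle
  have : (∏ _i ∈ hfin.toFinset, μ₀ {a}) ≠ 0 :=
    Finset.prod_ne_zero_iff.mpr fun _ _ => ha0
  exact this (le_antisymm hle zero_le)

theorem generalized_bernoulli_aux_infinite
    {G I X₀ : Type*} [Group G] [MulAction G I]
    [MeasurableSpace X₀] [MeasurableSingletonClass X₀]
    (μ₀ : Measure X₀) [IsProbabilityMeasure μ₀]
    (a : X₀) (ha0 : μ₀ {a} ≠ 0) (ha1 : μ₀ {a} < 1)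
    (μ : Measure (I → X₀))
    (hprod : ∀ (s : Finset I) (f : I → Set X₀), (∀ i, MeasurableSet (f i)) →
      μ {x : I → X₀ | ∀ i ∈ s, x i ∈ f i} = ∏ i ∈ s, μ₀ (f i))
    (g : G) (hSinf : {i : I | g • i ≠ i}.Infinite) :
    μ {x : I → X₀ | (fun i => x (g⁻¹ • i)) = x} = 0 := by
  classical
  set S : Set I := {i | g • i ≠ i} with hSdef
  -- build a sequence in S with pairwise "disjoint" pairs (f n, g • f n)
  let forb : List I → Finset I := fun l =>
    l.toFinset ∪ l.toFinset.image (fun i => g • i) ∪ l.toFinset.image (fun i => g⁻¹ • i)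
  let step : List I → I := fun l => (hSinf.exists_notMem_finset (forb l)).choose
  have step_mem : ∀ l, step l ∈ S := fun l =>
    (hSinf.exists_notMem_finset (forb l)).choose_spec.1
  have step_not : ∀ l, step l ∉ forb l := fun l =>
    (hSinf.exists_notMem_finset (forb l)).choose_spec.2
  let L : ℕ → List I := fun n => Nat.rec [] (fun _ l => step l :: l) n
  let f : ℕ → I := fun n => step (L n)
  have hLsucc : ∀ n, L (n + 1) = f n :: L n := fun n => rfl
  have hmemL : ∀ m n, m < n → f m ∈ L n := by
    intro m n h
    induction n with
    | zero => omega
    | succ k ih =>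
      rw [hLsucc]
      rcases Nat.lt_succ_iff_lt_or_eq.mp h with h' | h'
      · exact List.mem_cons_of_mem _ (ih h')
      · subst h'; exact List.mem_cons_self
  have hfS : ∀ n, f n ∈ S := fun n => step_mem (L n)
  have hself : ∀ n, g • f n ≠ f n := fun n => hfS n
  have hkey : ∀ m n, m < n → f n ≠ f m ∧ f n ≠ g • f m ∧ f n ≠ g⁻¹ • f m := by
    intro m n h
    have hnot := step_not (L n)
    have hm := hmemL m n h
    simp only [forb, Finset.mem_union, Finset.mem_image, List.mem_toFinset, not_or,
      not_exists, not_and] at hnot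
    obtain ⟨⟨h1, h2⟩, h3⟩ := hnot
    refine ⟨fun he => h1 ?_, fun he => h2 _ hm he.symm, fun he => h3 _ hm he.symm⟩
    · show f n ∈ L n
      rw [he]; exact hm
  have hne : ∀ m n, m ≠ n → f m ≠ f n ∧ f m ≠ g • f n := by
    intro m n hmn
    rcases hmn.lt_or_gt with h | h
    · refine ⟨fun he => (hkey m n h).1 he.symm, fun he => (hkey m n h).2.2 ?_⟩
      rw [he, inv_smul_smul]
    · exact ⟨(hkey n m h).1, (hkey n m h).2.1⟩
  -- atom measures
  set α : ENNReal := μ₀ {a} with hα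
  set β : ENNReal := μ₀ ({a}ᶜ) with hβ
  have hβ' : β = 1 - α := prob_compl_eq_one_sub (measurableSet_singleton a)
  set c : ENNReal := α * α + β * β with hc
  have hclt : c < 1 := by
    have hαtop : α ≠ ⊤ := measure_ne_top _ _
    have h1 : α * α < α := by
      have := (ENNReal.mul_lt_mul_iff_right (a := α) ha0 hαtop).mpr ha1
      rwa [mul_one] at this
    have h2 : β * β ≤ β := by
      calc β * β ≤ 1 * β := mul_le_mul_left prob_le_one β
      _ = β := one_mul β
    have hβtop : β ≠ ⊤ := by rw [hβ]; exact measure_ne_top _ _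
    calc c < α + β := ENNReal.add_lt_add_of_lt_of_le (ENNReal.mul_ne_top hβtop hβtop) h1 h2
    _ = 1 := by rw [hβ']; exact add_tsub_cancel_of_le ha1.le
  -- key bound: for each N, the fixed set has measure at most c ^ N
  have hbound : ∀ N : ℕ, μ {x : I → X₀ | (fun i => x (g⁻¹ • i)) = x} ≤ c ^ N := by
    intro N
    set A : Bool → Set X₀ := fun b => if b then {a} else {a}ᶜ with hA
    have hAmeas : ∀ b, MeasurableSet (A b) := by
      intro b
      cases b <;> simp [hA]
    have hAμ : ∀ b, μ₀ (A b) = if b then α else β := by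
      intro b; cases b <;> simp [hA, hα, hβ]
    let j : Fin N × Bool → I := fun p => if p.2 then f p.1 else g • f p.1
    have hjinj : Function.Injective j := by
      rintro ⟨m, b⟩ ⟨n, c⟩ h
      rcases b <;> rcases c <;> simp only [j, if_true, if_false, Bool.false_eq_true] at h
      · -- false false : g • f m = g • f n
        have hfe : f (m : ℕ) = f (n : ℕ) := smul_left_cancel g h
        have hmn : m = n := by
          by_contra hmn
          exact (hne m n fun he => hmn (Fin.ext he)).1 hfe
        rw [hmn]
      · -- false true : g • f m = f n
        exfalso
        by_cases hmn : (m : ℕ) = (n : ℕ)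
        · rw [show f (m : ℕ) = f (n : ℕ) from by rw [hmn]] at h
          exact hself n h
        · exact (hne n m (Ne.symm hmn)).2 h.symm
      · -- true false : f m = g • f n
        exfalso
        by_cases hmn : (m : ℕ) = (n : ℕ)
        · rw [show f (m : ℕ) = f (n : ℕ) from by rw [hmn]] at h
          exact hself n h.symm
        · exact (hne m n hmn).2 h
      · -- true true
        have hmn : m = n := by
          by_contra hmn
          exact (hne m n fun he => hmn (Fin.ext he)).1 h
        rw [hmn]
    set s : Finset I := Finset.image j Finset.univ with hs
    -- boxes
    let Box : (Fin N → Bool) → Set (I → X₀) := fun v =>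
      {x | ∀ p : Fin N × Bool, x (j p) ∈ A (v p.1)}
    have hcover : {x : I → X₀ | (fun i => x (g⁻¹ • i)) = x} ⊆ ⋃ v, Box v := by
      intro x hx
      have heq : ∀ n, x (g • f n) = x (f n) := by
        intro n
        have := congrFun (hx : (fun i => x (g⁻¹ • i)) = x) (g • f n)
        simpa [inv_smul_smul] using this.symm
      refine Set.mem_iUnion.mpr ⟨fun n => decide (x (f n) = a), ?_⟩
      rintro ⟨n, b⟩
      have hval : x (j (n, b)) = x (f n) := by
        rcases b <;> simp [j, heq]
      rw [hval]
      by_cases hxa : x (f n) = a <;> simp [A, hxa]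
    have hBoxμ : ∀ v, μ (Box v) = ∏ p : Fin N × Bool, μ₀ (A (v p.1)) := by
      intro v
      set Fv : I → Set X₀ := fun i => ⋂ (p : Fin N × Bool) (_ : j p = i), A (v p.1) with hFv
      have hFvmeas : ∀ i, MeasurableSet (Fv i) :=
        fun i => MeasurableSet.iInter fun p => MeasurableSet.iInter fun _ => hAmeas _
      have hFvj : ∀ p, Fv (j p) = A (v p.1) := by
        intro p
        apply Set.Subset.antisymm
        · intro y hy
          exact Set.mem_iInter₂.mp hy p rfl
        · refine Set.subset_iInter₂ fun q hq => ?_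
          rw [hjinj hq]
      have hbox : Box v = {x : I → X₀ | ∀ i ∈ s, x i ∈ Fv i} := by
        ext x
        constructor
        · intro h i hi
          refine Set.mem_iInter₂.mpr fun p hp => ?_
          rw [← hp]; exact h p
        · intro h p
          have hps : j p ∈ s := Finset.mem_image_of_mem j (Finset.mem_univ p)
          have := h (j p) hps
          rw [hFvj p] at this
          exact this
      rw [hbox, hprod s Fv hFvmeas, hs, Finset.prod_image (fun p _ q _ h => hjinj h)]
      exact Finset.prod_congr rfl fun p _ => by rw [hFvj p]
    calc μ {x : I → X₀ | (fun i => x (g⁻¹ • i)) = x}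
        ≤ μ (⋃ v, Box v) := measure_mono hcover
      _ ≤ ∑' v, μ (Box v) := measure_iUnion_le _
      _ = ∑ v : Fin N → Bool, μ (Box v) := tsum_fintype _
      _ = ∑ v : Fin N → Bool, ∏ n : Fin N, (μ₀ (A (v n)) * μ₀ (A (v n))) := by
          refine Finset.sum_congr rfl fun v _ => ?_
          rw [hBoxμ v, Fintype.prod_prod_type]
          exact Finset.prod_congr rfl fun n _ => by rw [Fintype.prod_bool]
      _ = ∏ n : Fin N, ∑ b : Bool, (μ₀ (A b) * μ₀ (A b)) := by
          rw [Fintype.prod_sum]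
      _ = c ^ N := by
          rw [Finset.prod_const]
          congr 1
          · rw [Fintype.sum_bool, hAμ, hAμ]; simp [hc]
          · simp
  -- conclude
  have htend := ENNReal.tendsto_pow_atTop_nhds_zero_of_lt_one hclt
  exact le_antisymm (ge_of_tendsto' htend hbound) zero_le


/-- **Essential freeness of generalized Bernoulli actions, atomic case.**
Let a countable group `G` act on a countable set `I`, and let `(X₀, μ₀)` be a
standard probability space having at least one atom and not concentrated on a single
atom.  Let `μ` be the product measure `μ₀^I` on `I → X₀` (characterized by its values
on cylinder sets).  The generalized Bernoulli action `G ↷ (X₀, μ₀)^I`,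
`(g·x)ᵢ = x_{g⁻¹·i}`, is essentially free — for every `g ≠ e` the set of `x` with
`g·x = x` is null — if and only if every `g ∈ G \ {e}` moves infinitely many
elements of `I`. -/
theorem generalized_bernoulli_free_iff_of_atomic
    {G I X₀ : Type*} [Group G] [Countable G] [Countable I] [MulAction G I]
    [MeasurableSpace X₀] [TopologicalSpace X₀] [PolishSpace X₀] [BorelSpace X₀]
    (μ₀ : Measure X₀) [IsProbabilityMeasure μ₀]
    (hatom : ∃ x : X₀, μ₀ {x} ≠ 0) (hnotdirac : ∀ x : X₀, μ₀ {x} ≠ 1)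
    (μ : Measure (I → X₀)) [IsProbabilityMeasure μ]
    (hprod : ∀ (s : Finset I) (f : I → Set X₀), (∀ i, MeasurableSet (f i)) →
      μ {x : I → X₀ | ∀ i ∈ s, x i ∈ f i} = ∏ i ∈ s, μ₀ (f i)) :
    (∀ g : G, g ≠ 1 → μ {x : I → X₀ | (fun i => x (g⁻¹ • i)) = x} = 0) ↔
      ∀ g : G, g ≠ 1 → {i : I | g • i ≠ i}.Infinite := by
  obtain ⟨a, ha0⟩ := hatom
  have ha1 : μ₀ {a} < 1 := lt_of_le_of_ne prob_le_one (hnotdirac a)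
  constructor
  · intro hfree g hg
    by_contra hfin
    rw [Set.not_infinite] at hfin
    exact generalized_bernoulli_aux_finite μ₀ a ha0 (measurableSet_singleton a) μ hprod g
      hfin (hfree g hg)
  · intro hmoves g hg
    exact generalized_bernoulli_aux_infinite μ₀ a ha0 ha1 μ hprod g (hmoves g hg)
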